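/- Let α ∈ ℝ, p₁ ≥ 0 and p₀, p₂ > 0, and let M(α) = α · [[p₁, 2p₀], [2p₂, p₁]]. Then for every t ≥ 0, with 1 = (1,1)ᵀ, 1ᵀ · M(α)^t · 1 = (1 + (p₀+p₂)/(2√(p₀p₂))) · ρ₁^t + (1 − (p₀+p₂)/(2√(p₀p₂))) · ρ₂^t, where ρ₁ = α(p₁ + 2√(p₀p₂)) and ρ₂ = α(p₁ − 2√(p₀p₂)). -/

import Mathlib

open Matrix

/-- For `M(α) = α • !![p₁, 2p₀; 2p₂, p₁]` with `p₁ ≥ 0` and `p₀, p₂ > 0`,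
for every `t ≥ 0` the sum of all entries of `M(α)^t` (that is, `1ᵀ M(α)^t 1`) equals
`(1 + (p₀+p₂)/(2√(p₀p₂))) ρ₁^t + (1 - (p₀+p₂)/(2√(p₀p₂))) ρ₂^t`, where
`ρ₁ = α(p₁ + 2√(p₀p₂))` and `ρ₂ = α(p₁ - 2√(p₀p₂))`. -/
theorem stmt10 (α p₀ p₁ p₂ : ℝ) (h1 : 0 ≤ p₁) (h0 : 0 < p₀) (h2 : 0 < p₂) (t : ℕ) :
    ∑ i : Fin 2, ∑ j : Fin 2, ((α • !![p₁, 2 * p₀; 2 * p₂, p₁]) ^ t) i j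
      = (1 + (p₀ + p₂) / (2 * Real.sqrt (p₀ * p₂)))
          * (α * (p₁ + 2 * Real.sqrt (p₀ * p₂))) ^ t
        + (1 - (p₀ + p₂) / (2 * Real.sqrt (p₀ * p₂)))
          * (α * (p₁ - 2 * Real.sqrt (p₀ * p₂))) ^ t := by
  set s := Real.sqrt (p₀ * p₂) with hs_def
  have hs0 : 0 < s := Real.sqrt_pos.mpr (by positivity)
  have hs : s * s = p₀ * p₂ := Real.mul_self_sqrt (by positivity)
  have hsne : s ≠ 0 := ne_of_gt hs0
  have key : ∀ n : ℕ, (α • !![p₁, 2 * p₀; 2 * p₂, p₁]) ^ n =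
      !![((α * (p₁ + 2 * s)) ^ n + (α * (p₁ - 2 * s)) ^ n) / 2,
         p₀ / s * (((α * (p₁ + 2 * s)) ^ n - (α * (p₁ - 2 * s)) ^ n) / 2);
         p₂ / s * (((α * (p₁ + 2 * s)) ^ n - (α * (p₁ - 2 * s)) ^ n) / 2),
         ((α * (p₁ + 2 * s)) ^ n + (α * (p₁ - 2 * s)) ^ n) / 2] := by
    intro n
    induction n with
    | zero =>
        ext i j
        fin_cases i <;> fin_cases j <;>
          simp [Matrix.one_apply] <;> norm_num
    | succ n ih =>
        rw [pow_succ, ih]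
        ext i j
        fin_cases i <;> fin_cases j <;>
          simp [Matrix.mul_apply, Fin.sum_univ_two, Matrix.smul_apply, pow_succ]
        · field_simp
          linear_combination (2 * α * ((α * (p₁ - 2 * s)) ^ n - (α * (p₁ + 2 * s)) ^ n)) * hs
        · field_simp
          ring
        · field_simp
          ring
        · field_simp
          linear_combination (2 * α * ((α * (p₁ - 2 * s)) ^ n - (α * (p₁ + 2 * s)) ^ n)) * hs
  rw [key t]
  simp [Fin.sum_univ_two]
  field_simp
  ring
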